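/- Let G be a finite simple graph on at least k+2 vertices with 2|E(G)| < k|V(G)|. Then there exists a set X of vertices such that G - X is disconnected and the subgraph induced by X has chromatic number at most k-1. -/
import Mathlib


/-- Every finite simple graph on at least `k+2` vertices with `2|E(G)| < k|V(G)|` admits a
cut `X` such that `G - X` is disconnected and `χ(G[X]) ≤ k-1`. -/
theorem stmt_1 {V : Type*} [Fintype V] (G : SimpleGraph V) [DecidableRel G.Adj]
    (k : ℕ) (hk : 0 < k) (hcard : k + 2 ≤ Fintype.card V)
    (hE : 2 * G.edgeFinset.card < k * Fintype.card V) :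
    ∃ X : Set V, ¬ (G.induce Xᶜ).Preconnected ∧
      (G.induce X).chromaticNumber ≤ (k - 1 : ℕ) := by
  classical
  have hdeg : ∃ v : V, G.degree v < k := by
    by_contra h
    push_neg at h
    have hsum : k * Fintype.card V ≤ ∑ v, G.degree v := by
      calc k * Fintype.card V = ∑ _v : V, k := by
            simp [Finset.sum_const, mul_comm]
        _ ≤ ∑ v, G.degree v := Finset.sum_le_sum fun v _ => h v
    rw [SimpleGraph.sum_degrees_eq_twice_card_edges] at hsum
    omega
  obtain ⟨v, hv⟩ := hdeg
  refine ⟨↑(G.neighborFinset v), ?_, ?_⟩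
  · intro hpre
    have hvX : v ∈ (↑(G.neighborFinset v) : Set V)ᶜ := by
      simp
    obtain ⟨u, hu⟩ : ∃ u, u ∉ G.neighborFinset v ∪ {v} := by
      by_contra h
      push_neg at h
      have hsub : Finset.univ ⊆ G.neighborFinset v ∪ {v} := fun x _ => h x
      have hc := Finset.card_le_card hsub
      have hc2 := Finset.card_union_le (G.neighborFinset v) {v}
      simp [SimpleGraph.card_neighborFinset_eq_degree] at hc hc2
      omega
    simp only [Finset.mem_union, Finset.mem_singleton, not_or] at hu
    have huX : u ∈ (↑(G.neighborFinset v) : Set V)ᶜ := by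
      simpa using hu.1
    have key : ∀ (a b : ((↑(G.neighborFinset v) : Set V)ᶜ : Set V))
        (w : (G.induce (↑(G.neighborFinset v) : Set V)ᶜ).Walk a b),
        a = ⟨v, hvX⟩ → b = ⟨v, hvX⟩ := by
      intro a b w
      induction w with
      | nil => intro h; exact h
      | cons h p ih =>
        rename_i x y z
        intro ha
        subst ha
        exfalso
        have hadj : G.Adj v ↑y := h
        exact y.2 (by simpa using hadj)
    obtain ⟨w⟩ := hpre ⟨v, hvX⟩ ⟨u, huX⟩
    have := key _ _ w rfl
    exact hu.2 (congrArg Subtype.val this)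
  · have hcol : (G.induce (↑(G.neighborFinset v) : Set V)).Colorable
        (Fintype.card (↑(G.neighborFinset v) : Set V)) :=
      SimpleGraph.colorable_of_fintype _
    have hle := hcol.chromaticNumber_le
    have hcard' : Fintype.card (↑(G.neighborFinset v) : Set V) ≤ k - 1 := by
      have : Fintype.card (↑(G.neighborFinset v) : Set V) = G.degree v :=
        (Fintype.card_congr (Equiv.setCongr (by simp [SimpleGraph.neighborFinset_def]))).trans (G.card_neighborSet_eq_degree v)
      omega
    exact hle.trans (by exact_mod_cast Nat.cast_le.mpr hcard')
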